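/- Let J_can = ⊕_i ⊕_{j=1}^{t_i} J_{k_{i,j}}(λ_i) be an n×n complex matrix in Jordan canonical form, where the λ_i are pairwise distinct and k_{i,1} ≥ k_{i,2} ≥ … ≥ k_{i,t_i} for each i. Let 𝒟 ⊆ ℂ^{n×n} be the linear subspace of matrices D that are block diagonal with respect to the partition of indices by distinct eigenvalues, and whose i-th diagonal block, partitioned into sub-blocks of size k_{i,j} × k_{i,l}, has the following support: the (j,l) sub-block with j ≤ l may be nonzero only in its last row, and the (j,l) sub-block with j > l may be nonzero only in its first column. Then there exist ε > 0 and maps S : ℂ^{n×n} → ℂ^{n×n} and D : ℂ^{n×n} → 𝒟, both complex analytic on the open Frobenius-norm ball of radius ε around 0, with S(0) = I and D(0) = 0, such that for every E with ‖E‖_F < ε the matrix S(E) is invertible and S(E)⁻¹ (J_can + E) S(E) = J_can + D(E). -/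

import Mathlib

open Matrix

attribute [local instance] Matrix.frobeniusNormedAddCommGroup Matrix.frobeniusNormedSpace

/-- Index set for a Jordan canonical form with distinct eigenvalues indexed by `Fin p`,
`t i` Jordan blocks for the `i`-th eigenvalue, the `j`-th of which has size `k i j`. -/
abbrev JordanIdx (p : ℕ) (t : Fin p → ℕ) (k : (i : Fin p) → Fin (t i) → ℕ) : Type :=
  Σ i : Fin p, Σ j : Fin (t i), Fin (k i j)

/-- The Jordan canonical form `⊕_i ⊕_j J_{k i j} (lam i)`. -/
def Jcan (p : ℕ) (lam : Fin p → ℂ) (t : Fin p → ℕ) (k : (i : Fin p) → Fin (t i) → ℕ) :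
    Matrix (JordanIdx p t k) (JordanIdx p t k) ℂ :=
  Matrix.of fun x y =>
    if x.1 = y.1 ∧ (x.2.1 : ℕ) = (y.2.1 : ℕ) then
      (if (y.2.2 : ℕ) = (x.2.2 : ℕ) then lam x.1
       else if (y.2.2 : ℕ) = (x.2.2 : ℕ) + 1 then 1 else 0)
    else 0

/-- The linear subspace `𝒟` of matrices supported as in Arnold's miniversal deformation of
the Jordan canonical form: block diagonal with respect to the distinct eigenvalues, and
within the `i`-th diagonal block, the `(j,l)` sub-block (of size `k i j × k i l`) may be
nonzero only in its last row if `j ≤ l`, and only in its first column if `j > l`. -/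
def arnoldSpace (p : ℕ) (t : Fin p → ℕ) (k : (i : Fin p) → Fin (t i) → ℕ) :
    Set (Matrix (JordanIdx p t k) (JordanIdx p t k) ℂ) :=
  {D | ∀ x y : JordanIdx p t k, D x y ≠ 0 →
    x.1 = y.1 ∧
    ((x.2.1 : ℕ) ≤ (y.2.1 : ℕ) → (x.2.2 : ℕ) = k x.1 x.2.1 - 1) ∧
    ((y.2.1 : ℕ) < (x.2.1 : ℕ) → (y.2.2 : ℕ) = 0)}

namespace ArnoldAux


/-- The nilpotent Jordan block. -/
def Nmat (n : ℕ) : Matrix (Fin n) (Fin n) ℂ :=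
  Matrix.of fun r c => if (c : ℕ) = (r : ℕ) + 1 then 1 else 0

/-- Shift terms -/
def upSh {a b : ℕ} (X : Matrix (Fin a) (Fin b) ℂ) (r : Fin a) (c : Fin b) : ℂ :=
  if h : (r : ℕ) + 1 < a then X ⟨(r : ℕ) + 1, h⟩ c else 0

def leftSh {a b : ℕ} (X : Matrix (Fin a) (Fin b) ℂ) (r : Fin a) (c : Fin b) : ℂ :=
  if _ : 0 < (c : ℕ) then X r ⟨(c : ℕ) - 1, lt_of_le_of_lt (Nat.sub_le _ _) c.isLt⟩ else 0

lemma Nmat_mul_apply {a b : ℕ} (X : Matrix (Fin a) (Fin b) ℂ) (r : Fin a) (c : Fin b) :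
    (Nmat a * X) r c = upSh X r c := by
  rw [Matrix.mul_apply, upSh]
  split_ifs with h
  · rw [Finset.sum_eq_single (⟨(r : ℕ) + 1, h⟩ : Fin a)]
    · simp [Nmat]
    · intro z _ hz
      simp only [Nmat, Matrix.of_apply]
      rw [if_neg, zero_mul]
      intro hzz
      exact hz (Fin.ext hzz)
    · simp
  · apply Finset.sum_eq_zero
    intro z _
    simp only [Nmat, Matrix.of_apply]
    rw [if_neg, zero_mul]
    intro hzz
    exact h (hzz ▸ z.isLt)

lemma mul_Nmat_apply {a b : ℕ} (X : Matrix (Fin a) (Fin b) ℂ) (r : Fin a) (c : Fin b) :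
    (X * Nmat b) r c = leftSh X r c := by
  rw [Matrix.mul_apply, leftSh]
  split_ifs with h
  · rw [Finset.sum_eq_single (⟨(c : ℕ) - 1, lt_of_le_of_lt (Nat.sub_le _ _) c.isLt⟩ : Fin b)]
    · simp only [Nmat, Matrix.of_apply]
      rw [if_pos (by omega), mul_one]
    · intro z _ hz
      simp only [Nmat, Matrix.of_apply]
      rw [if_neg, mul_zero]
      intro hzz
      exact hz (Fin.ext (show (z:ℕ) = (c:ℕ) - 1 by omega))
    · simp
  · apply Finset.sum_eq_zero
    intro z _
    simp only [Nmat, Matrix.of_apply]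
    rw [if_neg, mul_zero]
    omega

lemma Nmat_pow_apply {n : ℕ} (m : ℕ) (r c : Fin n) :
    ((Nmat n) ^ m) r c = if (c : ℕ) = (r : ℕ) + m then 1 else 0 := by
  induction m generalizing r c with
  | zero => simp [Matrix.one_apply, Fin.ext_iff, eq_comm]
  | succ m ih =>
    rw [pow_succ, Matrix.mul_apply]
    by_cases h : (r : ℕ) + m < n
    · rw [Finset.sum_eq_single (⟨(r : ℕ) + m, h⟩ : Fin n)]
      · rw [ih]
        have hv : ((⟨(r : ℕ) + m, h⟩ : Fin n) : ℕ) = (r : ℕ) + m := rfl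
        simp only [Nmat, Matrix.of_apply, hv, if_pos rfl, one_mul]
        by_cases hc : (c : ℕ) = (r : ℕ) + (m + 1)
        all_goals simp [Nat.add_assoc, hc]
      · intro z _ hz
        rw [ih, if_neg, zero_mul]
        intro hzz
        exact hz (Fin.ext hzz)
      · simp
    · rw [Finset.sum_eq_zero, if_neg (by omega)]
      intro z _
      rw [ih, if_neg, zero_mul]
      omega

lemma Nmat_pow_self (n : ℕ) : (Nmat n) ^ n = 0 := by
  ext r c
  rw [Nmat_pow_apply, if_neg (by omega)]
  rfl

/-- Case A: distinct eigenvalues; the shifted Sylvester operator is surjective. -/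
lemma exists_blockA {a b : ℕ} {μ : ℂ} (hμ : μ ≠ 0) (Y : Matrix (Fin a) (Fin b) ℂ) :
    ∃ X : Matrix (Fin a) (Fin b) ℂ, ∀ (r : Fin a) (c : Fin b),
      μ * X r c + upSh X r c - leftSh X r c + 0 = Y r c := by
  have hcomm : Commute (Nmat a) (μ • (1 : Matrix (Fin a) (Fin a) ℂ)) := by
    unfold Commute SemiconjBy
    simp [Matrix.mul_smul, Matrix.smul_mul]
  have hA : IsUnit (μ • (1 : Matrix (Fin a) (Fin a) ℂ) + Nmat a) := by
    refine IsNilpotent.isUnit_add_left_of_commute ⟨a, Nmat_pow_self a⟩ ?_ hcomm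
    exact ⟨⟨μ • 1, μ⁻¹ • 1,
      by rw [Matrix.smul_mul, Matrix.mul_smul, smul_smul, mul_inv_cancel₀ hμ, one_smul, one_mul],
      by rw [Matrix.smul_mul, Matrix.mul_smul, smul_smul, inv_mul_cancel₀ hμ, one_smul,
        one_mul]⟩, rfl⟩
  set B : Matrix (Fin a) (Fin a) ℂ := Ring.inverse (μ • (1 : Matrix (Fin a) (Fin a) ℂ) + Nmat a)
    with hB
  have hAB : (μ • (1 : Matrix (Fin a) (Fin a) ℂ) + Nmat a) * B = 1 :=
    Ring.mul_inverse_cancel _ hA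
  set f : ℕ → Matrix (Fin a) (Fin b) ℂ := fun m => (B ^ m) * Y * (Nmat b) ^ m with hf
  refine ⟨∑ m ∈ Finset.range b, (B ^ (m + 1)) * Y * (Nmat b) ^ m, fun r c => ?_⟩
  set X : Matrix (Fin a) (Fin b) ℂ :=
    ∑ m ∈ Finset.range b, (B ^ (m + 1)) * Y * (Nmat b) ^ m with hX
  have key : (μ • (1 : Matrix (Fin a) (Fin a) ℂ) + Nmat a) * X - X * Nmat b = Y := by
    have h1 : (μ • (1 : Matrix (Fin a) (Fin a) ℂ) + Nmat a) * X = ∑ m ∈ Finset.range b, f m := by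
      rw [hX, Matrix.mul_sum]
      refine Finset.sum_congr rfl fun m _ => ?_
      rw [hf]
      have hstep : (μ • (1 : Matrix (Fin a) (Fin a) ℂ) + Nmat a) * (B ^ (m + 1)) = B ^ m := by
        rw [pow_succ', ← mul_assoc, hAB, one_mul]
      rw [← Matrix.mul_assoc, ← Matrix.mul_assoc, hstep]
    have h2 : X * Nmat b = ∑ m ∈ Finset.range b, f (m + 1) := by
      rw [hX, Matrix.sum_mul]
      refine Finset.sum_congr rfl fun m _ => ?_
      rw [hf, Matrix.mul_assoc, ← pow_succ]
    rw [h1, h2, ← Finset.sum_sub_distrib, Finset.sum_range_sub' f b, hf]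
    simp [Nmat_pow_self]
  have e : ((μ • (1 : Matrix (Fin a) (Fin a) ℂ) + Nmat a) * X - X * Nmat b) r c = Y r c := by
    rw [key]
  rw [Matrix.sub_apply, Matrix.add_mul, Matrix.smul_mul, Matrix.one_mul, Matrix.add_apply,
    Matrix.smul_apply, Nmat_mul_apply, mul_Nmat_apply, smul_eq_mul] at e
  rw [add_zero]
  exact e



def solB (Y : ℕ → ℕ → ℂ) : ℕ → ℕ → ℂ
  | 0, _ => 0
  | r + 1, c => Y r c + if c = 0 then 0 else solB Y r (c - 1)

def solC (a b : ℕ) (Y : ℕ → ℕ → ℂ) : ℕ → ℕ → ℂ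
  | 0, c => if c + 1 < b then -Y (a - 1) (c + 1) else 0
  | s + 1, c => if c + 1 < b then solC a b Y s (c + 1) - Y (a - 1 - (s + 1)) (c + 1) else 0

lemma exists_blockB {a b : ℕ} (Y : Matrix (Fin a) (Fin b) ℂ) :
    ∃ X D : Matrix (Fin a) (Fin b) ℂ,
      (∀ r c, D r c ≠ 0 → (r : ℕ) = a - 1) ∧
      ∀ (r : Fin a) (c : Fin b),
        (0:ℂ) * X r c + upSh X r c - leftSh X r c + D r c = Y r c := by
  set Y' : ℕ → ℕ → ℂ := fun r c => if h : r < a ∧ c < b then Y ⟨r, h.1⟩ ⟨c, h.2⟩ else 0 with hY'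
  set X : Matrix (Fin a) (Fin b) ℂ := Matrix.of fun r c => solB Y' r c with hX
  refine ⟨X, Matrix.of fun r c => if (r:ℕ) = a - 1 then Y r c + leftSh X r c else 0, ?_, ?_⟩
  · intro r c hD
    by_contra hr
    rw [Matrix.of_apply, if_neg hr] at hD
    exact hD rfl
  · intro r c
    have hXe : ∀ (h1 : (r:ℕ) + 1 < a), X ⟨(r:ℕ)+1, h1⟩ c = Y r c + leftSh X r c := by
      intro h1
      show solB Y' ((r:ℕ)+1) (c:ℕ) = _
      rw [solB]
      congr 1
      · show Y' (r:ℕ) (c:ℕ) = Y r c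
        simp [hY']
      · rw [leftSh]
        by_cases hc : (c:ℕ) = 0
        · rw [if_pos hc, dif_neg (by omega)]
        · rw [if_neg hc, dif_pos (by omega)]
          rfl
    rw [zero_mul, zero_add, upSh]
    by_cases hr : (r:ℕ) + 1 < a
    · rw [dif_pos hr, hXe hr, Matrix.of_apply, if_neg (by omega)]
      ring
    · rw [dif_neg hr, Matrix.of_apply, if_pos (by omega)]
      ring

lemma exists_blockC {a b : ℕ} (Y : Matrix (Fin a) (Fin b) ℂ) :
    ∃ X D : Matrix (Fin a) (Fin b) ℂ,
      (∀ r c, D r c ≠ 0 → (c : ℕ) = 0) ∧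
      ∀ (r : Fin a) (c : Fin b),
        (0:ℂ) * X r c + upSh X r c - leftSh X r c + D r c = Y r c := by
  set Y' : ℕ → ℕ → ℂ := fun r c => if h : r < a ∧ c < b then Y ⟨r, h.1⟩ ⟨c, h.2⟩ else 0 with hY'
  set X : Matrix (Fin a) (Fin b) ℂ :=
    Matrix.of fun r c => solC a b Y' (a - 1 - (r:ℕ)) (c:ℕ) with hX
  refine ⟨X, Matrix.of fun r c => if (c:ℕ) = 0 then Y r c - upSh X r c else 0, ?_, ?_⟩
  · intro r c hD
    by_contra hc
    rw [Matrix.of_apply, if_neg hc] at hD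
    exact hD rfl
  · intro r c
    rw [zero_mul, zero_add]
    by_cases hc : (c:ℕ) = 0
    · rw [leftSh, dif_neg (by omega), Matrix.of_apply, if_pos hc]
      ring
    · rw [Matrix.of_apply, if_neg hc, add_zero, leftSh,
        dif_pos (show 0 < (c:ℕ) by omega)]
      have hctop : (c:ℕ) - 1 + 1 = (c:ℕ) := by omega
      have hXl : X r ⟨(c:ℕ)-1, lt_of_le_of_lt (Nat.sub_le _ _) c.isLt⟩
          = solC a b Y' (a - 1 - (r:ℕ)) ((c:ℕ)-1) := rfl
      rw [hXl]
      rcases hs : a - 1 - (r:ℕ) with _ | s'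
      · have hra : (r:ℕ) = a - 1 := by omega
        rw [solC, if_pos (by omega : (c:ℕ) - 1 + 1 < b), hctop]
        have hupz : upSh X r c = 0 := by rw [upSh, dif_neg (by omega)]
        have hY : Y' (a - 1) (c:ℕ) = Y r c := by
          rw [← hra]
          simp [hY']
        rw [hupz, hY]
        ring
      · have hr1 : (r:ℕ) + 1 < a := by omega
        rw [solC, if_pos (by omega : (c:ℕ) - 1 + 1 < b), hctop]
        have h1 : a - 1 - (s' + 1) = (r:ℕ) := by omega
        have h2 : a - 1 - ((r:ℕ) + 1) = s' := by omega
        have hup : upSh X r c = solC a b Y' s' (c:ℕ) := by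
          rw [upSh, dif_pos hr1]
          show solC a b Y' (a - 1 - ((r:ℕ)+1)) (c:ℕ) = _
          rw [h2]
        have hYr : Y' (a - 1 - (s' + 1)) (c:ℕ) = Y r c := by
          rw [h1]
          simp [hY']
        rw [hup, hYr]
        ring




variable {p : ℕ} (lam : Fin p → ℂ) (t : Fin p → ℕ) (k : (i : Fin p) → Fin (t i) → ℕ)

lemma Jcan_apply_eq (x z : JordanIdx p t k) :
    Jcan p lam t k x z =
      lam x.1 * (if z = x then 1 else 0) +
      (if h : (x.2.2 : ℕ) + 1 < k x.1 x.2.1 then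
        (if z = ⟨x.1, x.2.1, ⟨(x.2.2 : ℕ) + 1, h⟩⟩ then 1 else 0) else 0) := by
  obtain ⟨i, j, r⟩ := x
  obtain ⟨i', j', c⟩ := z
  simp only [Jcan, Matrix.of_apply]
  by_cases hi : i = i'
  · subst hi
    by_cases hj : j = j'
    · subst hj
      simp only [Sigma.mk.inj_iff, heq_eq_eq, Fin.ext_iff, true_and, and_self, if_true,
        eq_self_iff_true]
      have hcb := c.isLt
      split_ifs <;> first | (exfalso; omega) | ring
    · split_ifs <;> simp_all [Sigma.mk.inj_iff, Fin.ext_iff] <;> omega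
  · split_ifs <;> simp_all [Sigma.mk.inj_iff, Fin.ext_iff] <;> omega

lemma Jcan_apply_eq' (z y : JordanIdx p t k) :
    Jcan p lam t k z y =
      lam y.1 * (if z = y then 1 else 0) +
      (if _ : 0 < (y.2.2 : ℕ) then
        (if z = ⟨y.1, y.2.1, ⟨(y.2.2 : ℕ) - 1,
            lt_of_le_of_lt (Nat.sub_le _ _) y.2.2.isLt⟩⟩ then 1 else 0) else 0) := by
  obtain ⟨i, j, r⟩ := z
  obtain ⟨i', j', c⟩ := y
  simp only [Jcan, Matrix.of_apply]
  by_cases hi : i = i'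
  · subst hi
    by_cases hj : j = j'
    · subst hj
      simp only [Sigma.mk.inj_iff, heq_eq_eq, Fin.ext_iff, true_and, and_self, if_true,
        eq_self_iff_true]
      have hcb := c.isLt
      have hrb := r.isLt
      split_ifs <;> first | (exfalso; omega) | ring
    · split_ifs <;> simp_all [Sigma.mk.inj_iff, Fin.ext_iff] <;> omega
  · split_ifs <;> simp_all [Sigma.mk.inj_iff, Fin.ext_iff] <;> omega

lemma Jcan_mul_apply (X : Matrix (JordanIdx p t k) (JordanIdx p t k) ℂ)
    (x y : JordanIdx p t k) :
    (Jcan p lam t k * X) x y = lam x.1 * X x y +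
      (if h : (x.2.2 : ℕ) + 1 < k x.1 x.2.1 then
        X ⟨x.1, x.2.1, ⟨(x.2.2 : ℕ) + 1, h⟩⟩ y else 0) := by
  rw [Matrix.mul_apply]
  rw [Finset.sum_congr rfl fun z _ => congrArg (· * X z y) (Jcan_apply_eq lam t k x z)]
  simp only [add_mul]
  rw [Finset.sum_add_distrib]
  congr 1
  · rw [Finset.sum_congr rfl fun z _ => show lam x.1 * (if z = x then 1 else 0) * X z y
        = lam x.1 * (if z = x then X z y else 0) by split_ifs <;> ring]
    rw [← Finset.mul_sum, Finset.sum_ite_eq' Finset.univ x (fun z => X z y),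
      if_pos (Finset.mem_univ x)]
  · split_ifs with h
    · rw [Finset.sum_congr rfl fun z _ =>
        show (if z = (⟨x.1, x.2.1, ⟨(x.2.2 : ℕ) + 1, h⟩⟩ : JordanIdx p t k) then (1:ℂ) else 0)
            * X z y
          = (if z = (⟨x.1, x.2.1, ⟨(x.2.2 : ℕ) + 1, h⟩⟩ : JordanIdx p t k) then X z y else 0) by
          split_ifs <;> ring]
      rw [Finset.sum_ite_eq' Finset.univ _ (fun z => X z y), if_pos (Finset.mem_univ _)]
    · simp only [zero_mul, Finset.sum_const_zero]

lemma mul_Jcan_apply (X : Matrix (JordanIdx p t k) (JordanIdx p t k) ℂ)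
    (x y : JordanIdx p t k) :
    (X * Jcan p lam t k) x y = lam y.1 * X x y +
      (if _ : 0 < (y.2.2 : ℕ) then
        X x ⟨y.1, y.2.1, ⟨(y.2.2 : ℕ) - 1,
          lt_of_le_of_lt (Nat.sub_le _ _) y.2.2.isLt⟩⟩ else 0) := by
  rw [Matrix.mul_apply]
  rw [Finset.sum_congr rfl fun z _ => congrArg (X x z * ·) (Jcan_apply_eq' lam t k z y)]
  simp only [mul_add]
  rw [Finset.sum_add_distrib]
  congr 1
  · rw [Finset.sum_congr rfl fun z _ => show X x z * (lam y.1 * (if z = y then 1 else 0))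
        = lam y.1 * (if z = y then X x z else 0) by split_ifs <;> ring]
    rw [← Finset.mul_sum, Finset.sum_ite_eq' Finset.univ y (fun z => X x z),
      if_pos (Finset.mem_univ y)]
  · split_ifs with h
    · rw [Finset.sum_congr rfl fun z _ => show X x z *
          (if z = (⟨y.1, y.2.1, ⟨(y.2.2 : ℕ) - 1,
              lt_of_le_of_lt (Nat.sub_le _ _) y.2.2.isLt⟩⟩ : JordanIdx p t k) then (1:ℂ) else 0)
          = (if z = (⟨y.1, y.2.1, ⟨(y.2.2 : ℕ) - 1,
              lt_of_le_of_lt (Nat.sub_le _ _) y.2.2.isLt⟩⟩ : JordanIdx p t k)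
            then X x z else 0) by split_ifs <;> ring]
      rw [Finset.sum_ite_eq' Finset.univ _ (fun z => X x z), if_pos (Finset.mem_univ _)]
    · simp only [mul_zero, Finset.sum_const_zero]


lemma exists_solution (hlam : Function.Injective lam)
    (Y : Matrix (JordanIdx p t k) (JordanIdx p t k) ℂ) :
    ∃ X D : Matrix (JordanIdx p t k) (JordanIdx p t k) ℂ,
      (∀ x y : JordanIdx p t k, D x y ≠ 0 →
        x.1 = y.1 ∧ ((x.2.1 : ℕ) ≤ (y.2.1 : ℕ) → (x.2.2 : ℕ) = k x.1 x.2.1 - 1) ∧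
        ((y.2.1 : ℕ) < (x.2.1 : ℕ) → (y.2.2 : ℕ) = 0)) ∧
      Jcan p lam t k * X - X * Jcan p lam t k + D = Y := by
  have main : ∀ β β' : (Σ i : Fin p, Fin (t i)),
      ∃ Xb Db : Matrix (Fin (k β.1 β.2)) (Fin (k β'.1 β'.2)) ℂ,
        (∀ r c, Db r c ≠ 0 → β.1 = β'.1 ∧
          ((β.2 : ℕ) ≤ (β'.2 : ℕ) → (r : ℕ) = k β.1 β.2 - 1) ∧
          ((β'.2 : ℕ) < (β.2 : ℕ) → (c : ℕ) = 0)) ∧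
        (∀ r c, (lam β.1 - lam β'.1) * Xb r c + upSh Xb r c - leftSh Xb r c + Db r c
          = Y ⟨β.1, β.2, r⟩ ⟨β'.1, β'.2, c⟩) := by
    intro β β'
    by_cases hi : β.1 = β'.1
    · by_cases hj : (β.2 : ℕ) ≤ (β'.2 : ℕ)
      · obtain ⟨Xb, Db, hsupp, heq⟩ := exists_blockB
          (Matrix.of fun r c => Y ⟨β.1, β.2, r⟩ ⟨β'.1, β'.2, c⟩)
        refine ⟨Xb, Db, fun r c hD => ⟨hi, fun _ => hsupp r c hD, fun hlt => absurd hj (by omega)⟩,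
          fun r c => ?_⟩
        have h0 : lam β.1 - lam β'.1 = 0 := by rw [hi, sub_self]
        rw [h0]
        exact heq r c
      · obtain ⟨Xb, Db, hsupp, heq⟩ := exists_blockC
          (Matrix.of fun r c => Y ⟨β.1, β.2, r⟩ ⟨β'.1, β'.2, c⟩)
        refine ⟨Xb, Db, fun r c hD => ⟨hi, fun hle => absurd hle hj, fun _ => hsupp r c hD⟩,
          fun r c => ?_⟩
        have h0 : lam β.1 - lam β'.1 = 0 := by rw [hi, sub_self]
        rw [h0]
        exact heq r c
    · obtain ⟨Xb, hX⟩ := exists_blockA (sub_ne_zero.2 (fun h => hi (hlam h)))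
        (Matrix.of fun r c => Y ⟨β.1, β.2, r⟩ ⟨β'.1, β'.2, c⟩)
      exact ⟨Xb, 0, fun r c hD => absurd rfl hD, fun r c => hX r c⟩
  choose XB DB hsupp heq using main
  refine ⟨Matrix.of fun x y => XB ⟨x.1, x.2.1⟩ ⟨y.1, y.2.1⟩ x.2.2 y.2.2,
    Matrix.of fun x y => DB ⟨x.1, x.2.1⟩ ⟨y.1, y.2.1⟩ x.2.2 y.2.2, ?_, ?_⟩
  · rintro ⟨i, j, r⟩ ⟨i', l, c⟩ hD
    exact hsupp ⟨i, j⟩ ⟨i', l⟩ r c hD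
  · ext ⟨i, j, r⟩ ⟨i', l, c⟩
    rw [Matrix.add_apply, Matrix.sub_apply, Jcan_mul_apply, mul_Jcan_apply]
    have he := heq ⟨i, j⟩ ⟨i', l⟩ r c
    simp only [upSh, leftSh] at he
    simp only [Matrix.of_apply]
    linear_combination he


noncomputable def dSub (p : ℕ) (t : Fin p → ℕ) (k : (i : Fin p) → Fin (t i) → ℕ) :
    Submodule ℂ (Matrix (JordanIdx p t k) (JordanIdx p t k) ℂ) where
  carrier := {D | ∀ x y : JordanIdx p t k,
    ¬(x.1 = y.1 ∧ ((x.2.1 : ℕ) ≤ (y.2.1 : ℕ) → (x.2.2 : ℕ) = k x.1 x.2.1 - 1) ∧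
      ((y.2.1 : ℕ) < (x.2.1 : ℕ) → (y.2.2 : ℕ) = 0)) → D x y = 0}
  add_mem' := fun ha hb x y h => by
    rw [Matrix.add_apply, ha x y h, hb x y h, add_zero]
  zero_mem' := fun x y h => rfl
  smul_mem' := fun c D hD x y h => by
    rw [Matrix.smul_apply, hD x y h, smul_zero]

noncomputable def Lmap (p : ℕ) (lam : Fin p → ℂ) (t : Fin p → ℕ) (k : (i : Fin p) → Fin (t i) → ℕ) :
    (Matrix (JordanIdx p t k) (JordanIdx p t k) ℂ × dSub p t k) →ₗ[ℂ]
      Matrix (JordanIdx p t k) (JordanIdx p t k) ℂ where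
  toFun u := Jcan p lam t k * u.1 - u.1 * Jcan p lam t k + (u.2 : Matrix _ _ ℂ)
  map_add' u v := by
    obtain ⟨X, D⟩ := u
    obtain ⟨X', D'⟩ := v
    simp only [Prod.fst_add, Prod.snd_add, Submodule.coe_add, Matrix.mul_add, Matrix.add_mul]
    abel
  map_smul' c u := by
    obtain ⟨X, D⟩ := u
    simp only [Prod.smul_fst, Prod.smul_snd, Submodule.coe_smul, Matrix.mul_smul,
      Matrix.smul_mul, RingHom.id_apply, smul_sub, smul_add]

lemma Lmap_surjective (hlam : Function.Injective lam) :
    Function.Surjective (Lmap p lam t k) := by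
  intro Y
  obtain ⟨X, D, hD, hEq⟩ := exists_solution lam t k hlam Y
  exact ⟨⟨X, ⟨D, fun x y h => by
    by_contra hne
    exact h (hD x y hne)⟩⟩, hEq⟩


section Analysis

attribute [local instance] Matrix.frobeniusNormedAddCommGroup Matrix.frobeniusNormedSpace
  Matrix.frobeniusNormedRing Matrix.frobeniusNormedAlgebra

lemma master {p : ℕ} (lam : Fin p → ℂ) (t : Fin p → ℕ) (k : (i : Fin p) → Fin (t i) → ℕ)
    (hlam : Function.Injective lam) :
    ∃ ε > (0 : ℝ),
      ∃ S D : Matrix (JordanIdx p t k) (JordanIdx p t k) ℂ →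
          Matrix (JordanIdx p t k) (JordanIdx p t k) ℂ,
        AnalyticOnNhd ℂ S (Metric.ball 0 ε) ∧
        AnalyticOnNhd ℂ D (Metric.ball 0 ε) ∧
        S 0 = 1 ∧ D 0 = 0 ∧
        ∀ E ∈ Metric.ball (0 : Matrix (JordanIdx p t k) (JordanIdx p t k) ℂ) ε,
          (∀ x y : JordanIdx p t k, D E x y ≠ 0 →
            x.1 = y.1 ∧ ((x.2.1 : ℕ) ≤ (y.2.1 : ℕ) → (x.2.2 : ℕ) = k x.1 x.2.1 - 1) ∧
            ((y.2.1 : ℕ) < (x.2.1 : ℕ) → (y.2.2 : ℕ) = 0)) ∧ IsUnit (S E) ∧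
          (S E)⁻¹ * (Jcan p lam t k + E) * S E = Jcan p lam t k + D E := by
  classical
  set M := Matrix (JordanIdx p t k) (JordanIdx p t k) ℂ with hM
  set J : M := Jcan p lam t k with hJ
  -- right inverse of the linearized operator
  obtain ⟨g, hg⟩ := (Lmap p lam t k).exists_rightInverse_of_surjective
    (LinearMap.range_eq_top.2 (Lmap_surjective lam t k hlam))
  set Rx : M →L[ℂ] M :=
    LinearMap.toContinuousLinearMap ((LinearMap.fst ℂ M (dSub p t k)).comp g) with hRx
  set Rd : M →L[ℂ] M :=
    LinearMap.toContinuousLinearMap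
      ((dSub p t k).subtype.comp ((LinearMap.snd ℂ M (dSub p t k)).comp g)) with hRd
  have hR : ∀ Y : M, J * Rx Y - Rx Y * J + Rd Y = Y := by
    intro Y
    have := congrArg (fun (f : M →ₗ[ℂ] M) => f Y) hg
    simpa [Lmap, Rx, Rd] using this
  have hRsupp : ∀ (Y : M) (x y : JordanIdx p t k),
      ¬(x.1 = y.1 ∧ ((x.2.1 : ℕ) ≤ (y.2.1 : ℕ) → (x.2.2 : ℕ) = k x.1 x.2.1 - 1) ∧
        ((y.2.1 : ℕ) < (x.2.1 : ℕ) → (y.2.2 : ℕ) = 0)) → Rd Y x y = 0 := by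
    intro Y x y h
    exact (g Y).2.2 x y h
  -- the nonlinear map to invert
  set F : M × M → M × M :=
    fun q => (q.1, q.2 + q.1 + q.1 * Rx q.2 + Rx q.2 * Rd q.2) with hF
  have hFa : ∀ z : M × M, AnalyticAt ℂ F z := by
    intro z
    apply AnalyticAt.prod
    · exact analyticAt_fst
    · exact ((analyticAt_snd.add analyticAt_fst).add
        (analyticAt_fst.mul ((Rx.analyticAt _).comp analyticAt_snd))).add
        (((Rx.analyticAt _).comp analyticAt_snd).mul ((Rd.analyticAt _).comp analyticAt_snd))
  have hF0 : F 0 = 0 := by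
    simp [hF]
  -- the derivative at 0
  set e : (M × M) ≃ₗ[ℂ] (M × M) :=
    { toFun := fun q => (q.1, q.2 + q.1)
      invFun := fun q => (q.1, q.2 - q.1)
      map_add' := fun u v => by
        refine Prod.ext rfl ?_
        show u.2 + v.2 + (u.1 + v.1) = u.2 + u.1 + (v.2 + v.1)
        abel
      map_smul' := fun c u => by
        refine Prod.ext rfl ?_
        show c • u.2 + c • u.1 = c • (u.2 + u.1)
        rw [smul_add]
      left_inv := fun q => by
        refine Prod.ext rfl ?_
        show q.2 + q.1 - q.1 = q.2
        abel
      right_inv := fun q => by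
        refine Prod.ext rfl ?_
        show q.2 - q.1 + q.1 = q.2
        abel } with he
  set i := e.toContinuousLinearEquiv with hi
  have h1 : HasStrictFDerivAt (fun q : M × M => q.1) (ContinuousLinearMap.fst ℂ M M) 0 :=
    hasStrictFDerivAt_fst
  have h2 : HasStrictFDerivAt (fun q : M × M => q.2) (ContinuousLinearMap.snd ℂ M M) 0 :=
    hasStrictFDerivAt_snd
  have hx : HasStrictFDerivAt (fun q : M × M => Rx q.2)
      (Rx.comp (ContinuousLinearMap.snd ℂ M M)) 0 := Rx.hasStrictFDerivAt.comp 0 h2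
  have hd : HasStrictFDerivAt (fun q : M × M => Rd q.2)
      (Rd.comp (ContinuousLinearMap.snd ℂ M M)) 0 := Rd.hasStrictFDerivAt.comp 0 h2
  have hFd : HasStrictFDerivAt F (i : (M × M) →L[ℂ] (M × M)) 0 := by
    have hbig := h1.prodMk (((h2.add h1).add (h1.mul' hx)).add (hx.mul' hd))
    refine HasStrictFDerivAt.congr_fderiv hbig ?_
    refine ContinuousLinearMap.ext fun q => ?_
    have hz1 : ((0 : M × M).1 : M) = 0 := rfl
    have hz2 : ((0 : M × M).2 : M) = 0 := rfl
    simp only [hi, he, ContinuousLinearMap.prod_apply, ContinuousLinearMap.add_apply,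
      ContinuousLinearMap.coe_fst', ContinuousLinearMap.coe_snd',
      ContinuousLinearMap.coe_comp', Function.comp_apply, ContinuousLinearMap.smulRight_apply,
      ContinuousLinearMap.smul_apply, hz1, hz2, map_zero, smul_zero, zero_smul, add_zero,
      ContinuousLinearEquiv.coe_coe, LinearEquiv.coe_toContinuousLinearEquiv',
      LinearEquiv.coe_mk, ContinuousLinearMap.zero_apply, add_zero]
    refine Prod.ext rfl ?_
    exact (show q.2 + q.1 + ((0:M) * Rx q.2 + q.1 * (0:M)) + ((0:M) * Rd q.2 + Rx q.2 * (0:M)) = q.2 + q.1 by simp)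
  set phom := hFd.toOpenPartialHomeomorph F with hphom
  have hmem : (0 : M × M) ∈ phom.source := hFd.mem_toOpenPartialHomeomorph_source
  have hcoe : ⇑phom = F := hFd.toOpenPartialHomeomorph_coe
  have hp0 : phom 0 = 0 := by rw [hcoe]; exact hF0
  have hfd0 : fderiv ℂ (⇑phom) (0 : M × M) = (i : (M × M) →L[ℂ] (M × M)) := by
    rw [hcoe]; exact hFd.hasFDerivAt.fderiv
  have hsymm : AnalyticAt ℂ phom.symm (0 : M × M) := by
    have h := phom.analyticAt_symm' hmem (by rw [hcoe]; exact hFa 0) hfd0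
    rwa [hp0] at h
  have hU1 : {z : M × M | AnalyticAt ℂ phom.symm z} ∈ nhds (0 : M × M) :=
    hsymm.eventually_analyticAt
  have hU2 : phom.target ∈ nhds (0 : M × M) :=
    phom.open_target.mem_nhds (hp0 ▸ phom.map_source hmem)
  set w : M → M := fun E => (phom.symm (E, (0 : M))).2 with hw
  have hsymm0 : phom.symm (0 : M × M) = 0 := by
    have h := phom.left_inv hmem
    rwa [hp0] at h
  have hw0 : w 0 = 0 := by
    show (phom.symm ((0 : M), (0 : M))).2 = 0
    have : ((0 : M), (0 : M)) = (0 : M × M) := rfl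
    rw [this, hsymm0]
    rfl
  have hinl : Continuous (fun E : M => ((E, (0 : M)) : M × M)) :=
    continuous_id.prodMk continuous_const
  have hinl0 : (fun E : M => ((E, (0 : M)) : M × M)) 0 = (0 : M × M) := rfl
  have hpre1 : (fun E : M => ((E, (0 : M)) : M × M)) ⁻¹'
      {z : M × M | AnalyticAt ℂ phom.symm z} ∈ nhds (0 : M) := by
    exact (hinl.continuousAt (x := (0 : M))).preimage_mem_nhds hU1
  have hpre2 : (fun E : M => ((E, (0 : M)) : M × M)) ⁻¹' phom.target ∈ nhds (0 : M) := by
    exact (hinl.continuousAt (x := (0 : M))).preimage_mem_nhds hU2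
  have hwc : ContinuousAt w 0 := by
    have hcs : ContinuousAt phom.symm ((fun E : M => ((E, (0 : M)) : M × M)) 0) := by
      have := phom.continuousAt_symm (phom.map_source hmem)
      rwa [hp0] at this
    exact continuous_snd.continuousAt.comp
      (ContinuousAt.comp (f := fun E : M => ((E, (0 : M)) : M × M)) (x := (0 : M)) hcs
        hinl.continuousAt)
  have hlt : {E : M | ‖Rx (w E)‖ < 1} ∈ nhds (0 : M) := by
    have hc : ContinuousAt (fun E : M => ‖Rx (w E)‖) 0 :=
      continuous_norm.continuousAt.comp ((Rx.continuous.continuousAt).comp hwc)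
    have hval : ‖Rx (w 0)‖ < 1 := by rw [hw0]; simp
    have := hc.preimage_mem_nhds (isOpen_Iio.mem_nhds (by simpa using hval))
    simpa [Set.preimage] using this
  obtain ⟨ε, hε, hball⟩ := Metric.mem_nhds_iff.1
    (Filter.inter_mem (Filter.inter_mem hpre1 hpre2) hlt)
  refine ⟨ε, hε, fun E => 1 + Rx (w E), fun E => -(Rd (w E)), ?_, ?_, ?_, ?_, ?_⟩
  · -- S analytic
    intro E hE
    have hz : AnalyticAt ℂ phom.symm ((E, (0 : M)) : M × M) := (hball hE).1.1
    have ha : AnalyticAt ℂ (fun E' : M => ((E', (0 : M)) : M × M)) E :=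
      analyticAt_id.prod analyticAt_const
    have hcomp : AnalyticAt ℂ (fun E' : M => phom.symm ((E', (0 : M)) : M × M)) E :=
      AnalyticAt.comp (f := fun E' : M => ((E', (0 : M)) : M × M)) hz ha
    exact analyticAt_const.add ((Rx.analyticAt _).comp (analyticAt_snd.comp hcomp))
  · -- D analytic
    intro E hE
    have hz : AnalyticAt ℂ phom.symm ((E, (0 : M)) : M × M) := (hball hE).1.1
    have ha : AnalyticAt ℂ (fun E' : M => ((E', (0 : M)) : M × M)) E :=
      analyticAt_id.prod analyticAt_const
    have hcomp : AnalyticAt ℂ (fun E' : M => phom.symm ((E', (0 : M)) : M × M)) E :=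
      AnalyticAt.comp (f := fun E' : M => ((E', (0 : M)) : M × M)) hz ha
    exact (((Rd.analyticAt _).comp (analyticAt_snd.comp hcomp))).neg
  · show (1 : M) + Rx (w 0) = 1
    rw [hw0]
    simp
  · show -(Rd (w 0)) = 0
    rw [hw0]
    simp
  · intro E hE
    have hnorm : ‖Rx (w E)‖ < 1 := (hball hE).2
    have htar : ((E, (0 : M)) : M × M) ∈ phom.target := (hball hE).1.2
    have h5 : F (phom.symm ((E, (0 : M)) : M × M)) = ((E, (0 : M)) : M × M) := by
      rw [← hcoe]; exact phom.right_inv htar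
    have hu1 : (phom.symm ((E, (0 : M)) : M × M)).1 = E := congrArg Prod.fst h5
    have hFE : F (E, w E) = ((E, (0 : M)) : M × M) := by
      have heq : ((E, w E) : M × M) = phom.symm ((E, (0 : M)) : M × M) :=
        Prod.ext hu1.symm rfl
      rw [heq]
      exact h5
    have hstar : w E + E + E * Rx (w E) + Rx (w E) * Rd (w E) = 0 :=
      congrArg Prod.snd hFE
    set X : M := Rx (w E) with hX
    set D' : M := Rd (w E) with hD'
    have hSE : IsUnit (1 + X) := by
      have h6 : ‖-X‖ < 1 := lt_of_eq_of_lt (norm_neg X) hnorm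
      exact ⟨Units.oneSub (-X) h6, by simp [Units.oneSub, sub_neg_eq_add]⟩
    refine ⟨?_, hSE, ?_⟩
    · intro x y hxy
      by_contra hne
      apply hxy
      show (-(Rd (w E))) x y = 0
      rw [Matrix.neg_apply, hRsupp (w E) x y hne, neg_zero]
    · have hL := hR (w E)
      rw [← hX, ← hD'] at hL
      show (1 + X)⁻¹ * (J + E) * (1 + X) = J + -D'
      have h7 : (J + E) * (1 + X) - (1 + X) * (J + -D')
          = (J * X - X * J + D' - w E) + (w E + E + E * X + X * D') := by
        noncomm_ring
        rw [mul_neg, smul_neg, ← neg_smul, neg_neg, one_smul]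
      rw [hL, sub_self, hstar, zero_add] at h7
      have hkey : (J + E) * (1 + X) = (1 + X) * (J + -D') := sub_eq_zero.mp h7
      have hdet : IsUnit (1 + X).det := (Matrix.isUnit_iff_isUnit_det _).1 hSE
      calc (1 + X)⁻¹ * (J + E) * (1 + X)
          = (1 + X)⁻¹ * ((J + E) * (1 + X)) := by rw [Matrix.mul_assoc]
        _ = (1 + X)⁻¹ * ((1 + X) * (J + -D')) := by rw [hkey]
        _ = ((1 + X)⁻¹ * (1 + X)) * (J + -D') := by rw [Matrix.mul_assoc]
        _ = J + -D' := by rw [Matrix.nonsing_inv_mul _ hdet, Matrix.one_mul]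

end Analysis

end ArnoldAux

/-- Arnold's theorem: all matrices `J_can + E` sufficiently close to a Jordan canonical form
`J_can` can be reduced, by a similarity transformation `S(E)` depending holomorphically on `E`
with `S(0) = I`, to the miniversal normal form `J_can + D(E)` with `D(E) ∈ 𝒟` depending
holomorphically on `E` and `D(0) = 0`. -/
theorem miniversal_deformation_of_JCF (p : ℕ) (lam : Fin p → ℂ)
    (hlam : Function.Injective lam) (t : Fin p → ℕ) (ht : ∀ i, 0 < t i)
    (k : (i : Fin p) → Fin (t i) → ℕ) (hk : ∀ i j, 0 < k i j)
    (hmono : ∀ (i : Fin p) (j l : Fin (t i)), j ≤ l → k i l ≤ k i j) :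
    ∃ ε > (0 : ℝ),
      ∃ S D : Matrix (JordanIdx p t k) (JordanIdx p t k) ℂ →
          Matrix (JordanIdx p t k) (JordanIdx p t k) ℂ,
        AnalyticOnNhd ℂ S (Metric.ball 0 ε) ∧
        AnalyticOnNhd ℂ D (Metric.ball 0 ε) ∧
        S 0 = 1 ∧ D 0 = 0 ∧
        ∀ E ∈ Metric.ball (0 : Matrix (JordanIdx p t k) (JordanIdx p t k) ℂ) ε,
          D E ∈ arnoldSpace p t k ∧ IsUnit (S E) ∧
          (S E)⁻¹ * (Jcan p lam t k + E) * S E = Jcan p lam t k + D E := by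
  obtain ⟨ε, hε, S, D, hS, hD, hS0, hD0, hmain⟩ := ArnoldAux.master lam t k hlam
  exact ⟨ε, hε, S, D, hS, hD, hS0, hD0, fun E hE =>
    ⟨(hmain E hE).1, (hmain E hE).2.1, (hmain E hE).2.2⟩⟩
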